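/- Suppose the graph has dimension at most D with constant c_D. Let Ξ and Ξ′ be disjoint nonempty subsets of L, write dist(Ξ,Ξ′) = min{dist(i,j) : i ∈ Ξ, j ∈ Ξ′}, and let f : ℕ → [0,∞) be any nonnegative function. Then ∑_{i∈Ξ} ∑_{j∈Ξ′} f(dist(i,j)) ≤ c_D · min{|∂Ξ|, |∂Ξ′|} · ∑_{d = dist(Ξ,Ξ′)}^{d_max} f(d) · d^{D−1} · (1 + c_D·(d − dist(Ξ,Ξ′))^{D}), where d_max = max{dist(i,j) : i ∈ Ξ, j ∈ Ξ′}. -/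

import Mathlib

/-- The boundary `∂A` of a set of vertices: sites of `A` adjacent to some site
outside of `A`. -/
def graphBoundary {V : Type*} [Fintype V] [DecidableEq V]
    (G : SimpleGraph V) [DecidableRel G.Adj] (A : Finset V) : Finset V :=
  A.filter fun i => ∃ j, j ∉ A ∧ G.Adj i j

private lemma exit_lemma {V : Type*} [Fintype V] [DecidableEq V]
    {G : SimpleGraph V} [DecidableRel G.Adj] (hconn : G.Connected) (A : Finset V) :
    ∀ {u v : V} (p : G.Walk u v), u ∈ A → v ∉ A →
      ∃ b ∈ graphBoundary G A, G.dist u b + G.dist b v ≤ p.length := by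
  intro u v p
  induction p with
  | nil => intro hu hv; exact absurd hu hv
  | @cons u w v hadj q ih =>
    intro hu hv
    by_cases hw : w ∈ A
    · obtain ⟨b, hb, hle⟩ := ih hw hv
      refine ⟨b, hb, ?_⟩
      have htri : G.dist u b ≤ G.dist u w + G.dist w b := hconn.dist_triangle
      have huw : G.dist u w ≤ 1 := by
        have := SimpleGraph.dist_le (SimpleGraph.Walk.cons hadj SimpleGraph.Walk.nil)
        simpa using this
      simp only [SimpleGraph.Walk.length_cons]
      omega
    · refine ⟨u, ?_, ?_⟩
      · simp only [graphBoundary, Finset.mem_filter]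
        exact ⟨hu, w, hw, hadj⟩
      · have h1 : G.dist u v ≤ (SimpleGraph.Walk.cons hadj q).length :=
          SimpleGraph.dist_le _
        have h2 : G.dist u u = 0 := SimpleGraph.dist_self
        omega

private lemma ball_card_le {V : Type*} [Fintype V] [DecidableEq V]
    {G : SimpleGraph V} [DecidableRel G.Adj] (hconn : G.Connected)
    {D : ℕ} (hD : 1 ≤ D) {cD : ℝ} (hcD : 1 ≤ cD)
    (hdim : ∀ i : V, ∀ r : ℕ, 1 ≤ r →
      ((Finset.univ.filter (fun k : V => G.dist i k = r)).card : ℝ) ≤ cD * (r : ℝ) ^ (D - 1))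
    (b : V) (R : ℕ) :
    ((Finset.univ.filter (fun k : V => G.dist b k ≤ R)).card : ℝ) ≤ 1 + cD * (R : ℝ) ^ D := by
  have hsub : Finset.univ.filter (fun k : V => G.dist b k ≤ R) ⊆
      insert b ((Finset.Icc 1 R).biUnion fun r =>
        Finset.univ.filter fun k : V => G.dist b k = r) := by
    intro k hk
    simp only [Finset.mem_filter, Finset.mem_univ, true_and] at hk
    rcases Nat.eq_zero_or_pos (G.dist b k) with h0 | hpos
    · have : k = b := (hconn.dist_eq_zero_iff.mp h0).symm
      simp [this]
    · refine Finset.mem_insert_of_mem ?_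
      simp only [Finset.mem_biUnion, Finset.mem_Icc, Finset.mem_filter, Finset.mem_univ,
        true_and]
      exact ⟨G.dist b k, ⟨hpos, hk⟩, rfl⟩
  have h1 : (Finset.univ.filter (fun k : V => G.dist b k ≤ R)).card ≤
      1 + ∑ r ∈ Finset.Icc 1 R, (Finset.univ.filter fun k : V => G.dist b k = r).card := by
    calc (Finset.univ.filter (fun k : V => G.dist b k ≤ R)).card
        ≤ (insert b ((Finset.Icc 1 R).biUnion fun r =>
            Finset.univ.filter fun k : V => G.dist b k = r)).card := Finset.card_le_card hsub
      _ ≤ ((Finset.Icc 1 R).biUnion fun r =>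
            Finset.univ.filter fun k : V => G.dist b k = r).card + 1 :=
          Finset.card_insert_le _ _
      _ ≤ (∑ r ∈ Finset.Icc 1 R,
            (Finset.univ.filter fun k : V => G.dist b k = r).card) + 1 := by
          exact Nat.add_le_add_right (Finset.card_biUnion_le) 1
      _ = _ := by omega
  have h2 : ((Finset.univ.filter (fun k : V => G.dist b k ≤ R)).card : ℝ) ≤
      1 + ∑ r ∈ Finset.Icc 1 R,
        ((Finset.univ.filter fun k : V => G.dist b k = r).card : ℝ) := by
    exact_mod_cast h1
  have h3 : ∑ r ∈ Finset.Icc 1 R,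
      ((Finset.univ.filter fun k : V => G.dist b k = r).card : ℝ) ≤
      ∑ r ∈ Finset.Icc 1 R, cD * (R : ℝ) ^ (D - 1) := by
    apply Finset.sum_le_sum
    intro r hr
    simp only [Finset.mem_Icc] at hr
    calc ((Finset.univ.filter fun k : V => G.dist b k = r).card : ℝ)
        ≤ cD * (r : ℝ) ^ (D - 1) := hdim b r hr.1
      _ ≤ cD * (R : ℝ) ^ (D - 1) := by
          apply mul_le_mul_of_nonneg_left _ (by linarith)
          exact pow_le_pow_left₀ (by positivity) (Nat.cast_le.mpr hr.2) _
  have h4 : ∑ r ∈ Finset.Icc 1 R, cD * (R : ℝ) ^ (D - 1) =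
      (R : ℝ) * (cD * (R : ℝ) ^ (D - 1)) := by
    rw [Finset.sum_const, Nat.card_Icc]
    simp [nsmul_eq_mul]
  have h5 : (R : ℝ) ^ D = (R : ℝ) ^ (D - 1) * (R : ℝ) := by
    conv_lhs => rw [← Nat.sub_add_cancel hD]
    rw [pow_succ]
  calc ((Finset.univ.filter (fun k : V => G.dist b k ≤ R)).card : ℝ)
      ≤ 1 + ∑ r ∈ Finset.Icc 1 R,
        ((Finset.univ.filter fun k : V => G.dist b k = r).card : ℝ) := h2
    _ ≤ 1 + (R : ℝ) * (cD * (R : ℝ) ^ (D - 1)) := by rw [← h4]; linarith [h3]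
    _ = 1 + cD * (R : ℝ) ^ D := by rw [h5]; ring

private lemma aux_bound {V : Type*} [Fintype V] [DecidableEq V]
    (G : SimpleGraph V) [DecidableRel G.Adj] (hconn : G.Connected)
    (D : ℕ) (hD : 1 ≤ D) (cD : ℝ) (hcD : 1 ≤ cD)
    (hdim : ∀ i : V, ∀ r : ℕ, 1 ≤ r →
      ((Finset.univ.filter (fun k : V => G.dist i k = r)).card : ℝ) ≤ cD * (r : ℝ) ^ (D - 1))
    (Ξ Ξ' : Finset V) (hΞ : Ξ.Nonempty) (hΞ' : Ξ'.Nonempty) (hdisj : Disjoint Ξ Ξ')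
    (f : ℕ → ℝ) (hf : ∀ d : ℕ, 0 ≤ f d) :
    (∑ i ∈ Ξ, ∑ j ∈ Ξ', f (G.dist i j)) ≤
      cD * ((graphBoundary G Ξ').card : ℝ) *
        ∑ d ∈ Finset.Icc
            ((Ξ ×ˢ Ξ').inf' (hΞ.product hΞ') fun p => G.dist p.1 p.2)
            ((Ξ ×ˢ Ξ').sup' (hΞ.product hΞ') fun p => G.dist p.1 p.2),
          f d * (d : ℝ) ^ (D - 1) *
            (1 + cD *
              ((d - (Ξ ×ˢ Ξ').inf' (hΞ.product hΞ') fun p => G.dist p.1 p.2 : ℕ) : ℝ) ^ D) := by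
  set d₀ := (Ξ ×ˢ Ξ').inf' (hΞ.product hΞ') fun p => G.dist p.1 p.2 with hd₀
  set M := (Ξ ×ˢ Ξ').sup' (hΞ.product hΞ') fun p => G.dist p.1 p.2 with hM
  -- d₀ ≥ 1
  have hd₀pos : 1 ≤ d₀ := by
    obtain ⟨p, hp, hpe⟩ := Finset.exists_mem_eq_inf' (hΞ.product hΞ')
      (fun p : V × V => G.dist p.1 p.2)
    rw [Finset.mem_product] at hp
    rw [hd₀, hpe]
    by_contra hc
    push_neg at hc
    interval_cases h : G.dist p.1 p.2
    · have : p.1 = p.2 := hconn.dist_eq_zero_iff.mp h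
      exact Finset.disjoint_left.mp hdisj hp.1 (this ▸ hp.2)
  -- rewrite LHS fiberwise
  have hmaps : ∀ p ∈ Ξ ×ˢ Ξ', G.dist p.1 p.2 ∈ Finset.Icc d₀ M := by
    intro p hp
    rw [Finset.mem_Icc]
    exact ⟨Finset.inf'_le (fun p : V × V => G.dist p.1 p.2) hp,
      Finset.le_sup' (fun p : V × V => G.dist p.1 p.2) hp⟩
  have hLHS : (∑ i ∈ Ξ, ∑ j ∈ Ξ', f (G.dist i j)) =
      ∑ d ∈ Finset.Icc d₀ M,
        (((Ξ ×ˢ Ξ').filter fun p => G.dist p.1 p.2 = d).card : ℝ) * f d := by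
    rw [← Finset.sum_product']
    rw [← Finset.sum_fiberwise_of_maps_to hmaps (fun p => f (G.dist p.1 p.2))]
    apply Finset.sum_congr rfl
    intro d _
    rw [Finset.sum_congr rfl (fun p hp => ?_), Finset.sum_const, nsmul_eq_mul]
    rw [Finset.mem_filter] at hp
    rw [hp.2]
  rw [hLHS, Finset.mul_sum]
  apply Finset.sum_le_sum
  intro d hd
  rw [Finset.mem_Icc] at hd
  have hd1 : 1 ≤ d := le_trans hd₀pos hd.1
  set R := d - d₀ with hR
  set B' := graphBoundary G Ξ' with hB'
  set J := Ξ'.filter (fun j => ∃ b ∈ B', G.dist j b ≤ R) with hJ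
  -- fiber counting
  have hfib : ((Ξ ×ˢ Ξ').filter fun p => G.dist p.1 p.2 = d) ⊆
      J.biUnion fun j => (Finset.univ.filter fun i : V => G.dist j i = d).image
        fun i => (i, j) := by
    intro p hp
    rw [Finset.mem_filter, Finset.mem_product] at hp
    obtain ⟨⟨hp1, hp2⟩, hpd⟩ := hp
    have hp1' : p.1 ∉ Ξ' := Finset.disjoint_left.mp hdisj hp1
    obtain ⟨q, hq⟩ := hconn.exists_walk_length_eq_dist p.2 p.1
    obtain ⟨b, hb, hble⟩ := exit_lemma hconn Ξ' q hp2 hp1'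
    have hbΞ' : b ∈ Ξ' := Finset.mem_of_mem_filter _ hb
    have hd₀le : d₀ ≤ G.dist b p.1 := by
      have := Finset.inf'_le (fun p : V × V => G.dist p.1 p.2)
        (Finset.mem_product.mpr ⟨hp1, hbΞ'⟩ : (p.1, b) ∈ Ξ ×ˢ Ξ')
      exact le_of_le_of_eq this SimpleGraph.dist_comm
    have hqlen : q.length = d := by rw [hq, SimpleGraph.dist_comm, hpd]
    have hjb : G.dist p.2 b ≤ R := by omega
    rw [Finset.mem_biUnion]
    refine ⟨p.2, ?_, ?_⟩
    · rw [hJ, Finset.mem_filter]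
      exact ⟨hp2, b, hb, hjb⟩
    · rw [Finset.mem_image]
      refine ⟨p.1, ?_, rfl⟩
      simp only [Finset.mem_filter, Finset.mem_univ, true_and]
      rw [SimpleGraph.dist_comm]
      exact hpd
  have hN1 : (((Ξ ×ˢ Ξ').filter fun p => G.dist p.1 p.2 = d).card : ℝ) ≤
      (J.card : ℝ) * (cD * (d : ℝ) ^ (D - 1)) := by
    have h1 : ((Ξ ×ˢ Ξ').filter fun p => G.dist p.1 p.2 = d).card ≤
        ∑ j ∈ J, ((Finset.univ.filter fun i : V => G.dist j i = d).image
          fun i => (i, j)).card :=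
      (Finset.card_le_card hfib).trans Finset.card_biUnion_le
    have h2 : (((Ξ ×ˢ Ξ').filter fun p => G.dist p.1 p.2 = d).card : ℝ) ≤
        ∑ j ∈ J, (((Finset.univ.filter fun i : V => G.dist j i = d).image
          fun i => (i, j)).card : ℝ) := by exact_mod_cast h1
    refine h2.trans ?_
    have h3 : ∀ j ∈ J, (((Finset.univ.filter fun i : V => G.dist j i = d).image
        fun i => (i, j)).card : ℝ) ≤ cD * (d : ℝ) ^ (D - 1) := by
      intro j _
      calc (((Finset.univ.filter fun i : V => G.dist j i = d).image
            fun i => (i, j)).card : ℝ)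
          ≤ ((Finset.univ.filter fun i : V => G.dist j i = d).card : ℝ) := by
            exact_mod_cast Finset.card_image_le
        _ ≤ cD * (d : ℝ) ^ (D - 1) := hdim j d hd1
    calc ∑ j ∈ J, (((Finset.univ.filter fun i : V => G.dist j i = d).image
          fun i => (i, j)).card : ℝ)
        ≤ ∑ _j ∈ J, cD * (d : ℝ) ^ (D - 1) := Finset.sum_le_sum h3
      _ = (J.card : ℝ) * (cD * (d : ℝ) ^ (D - 1)) := by
          rw [Finset.sum_const, nsmul_eq_mul]
  have hJcard : (J.card : ℝ) ≤ (B'.card : ℝ) * (1 + cD * (R : ℝ) ^ D) := by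
    have hsub : J ⊆ B'.biUnion fun b => Finset.univ.filter fun k : V => G.dist b k ≤ R := by
      intro j hj
      rw [hJ, Finset.mem_filter] at hj
      obtain ⟨_, b, hb, hjb⟩ := hj
      rw [Finset.mem_biUnion]
      refine ⟨b, hb, ?_⟩
      simp only [Finset.mem_filter, Finset.mem_univ, true_and]
      rw [SimpleGraph.dist_comm]
      exact hjb
    have h1 : J.card ≤ ∑ b ∈ B', (Finset.univ.filter fun k : V => G.dist b k ≤ R).card :=
      (Finset.card_le_card hsub).trans Finset.card_biUnion_le
    have h2 : (J.card : ℝ) ≤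
        ∑ b ∈ B', ((Finset.univ.filter fun k : V => G.dist b k ≤ R).card : ℝ) := by
      exact_mod_cast h1
    refine h2.trans ?_
    calc ∑ b ∈ B', ((Finset.univ.filter fun k : V => G.dist b k ≤ R).card : ℝ)
        ≤ ∑ _b ∈ B', (1 + cD * (R : ℝ) ^ D) :=
          Finset.sum_le_sum fun b _ => ball_card_le hconn hD hcD hdim b R
      _ = (B'.card : ℝ) * (1 + cD * (R : ℝ) ^ D) := by
          rw [Finset.sum_const, nsmul_eq_mul]
  -- combine
  have hpowpos : (0 : ℝ) ≤ cD * (d : ℝ) ^ (D - 1) := by positivity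
  have hN2 : (((Ξ ×ˢ Ξ').filter fun p => G.dist p.1 p.2 = d).card : ℝ) ≤
      (B'.card : ℝ) * (1 + cD * (R : ℝ) ^ D) * (cD * (d : ℝ) ^ (D - 1)) :=
    hN1.trans (mul_le_mul_of_nonneg_right hJcard hpowpos)
  have hrhs : cD * (B'.card : ℝ) *
      (f d * (d : ℝ) ^ (D - 1) * (1 + cD * (R : ℝ) ^ D)) =
      f d * ((B'.card : ℝ) * (1 + cD * (R : ℝ) ^ D) * (cD * (d : ℝ) ^ (D - 1))) := by
    ring
  rw [hrhs]
  calc (((Ξ ×ˢ Ξ').filter fun p => G.dist p.1 p.2 = d).card : ℝ) * f d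
      = f d * (((Ξ ×ˢ Ξ').filter fun p => G.dist p.1 p.2 = d).card : ℝ) := by ring
    _ ≤ f d * ((B'.card : ℝ) * (1 + cD * (R : ℝ) ^ D) * (cD * (d : ℝ) ^ (D - 1))) :=
        mul_le_mul_of_nonneg_left hN2 (hf d)

/-- **Surface-resolved summation bound.** On a graph of dimension `D` with constant
`c_D`, for disjoint nonempty `Ξ`, `Ξ′` and any nonnegative `f : ℕ → ℝ`,
`∑_{i∈Ξ} ∑_{j∈Ξ′} f(dist(i,j)) ≤ c_D · min{|∂Ξ|, |∂Ξ′|} ·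
∑_{d=dist(Ξ,Ξ′)}^{d_max} f(d)·d^{D−1}·(1 + c_D·(d − dist(Ξ,Ξ′))^D)`, where
`dist(Ξ,Ξ′)` and `d_max` are the minimal and maximal distance between the two sets. -/
theorem sum_over_sets_le_boundary {V : Type*} [Fintype V] [DecidableEq V]
    (G : SimpleGraph V) [DecidableRel G.Adj] (hconn : G.Connected)
    (D : ℕ) (hD : 1 ≤ D) (cD : ℝ) (hcD : 1 ≤ cD)
    (hdim : ∀ i : V, ∀ r : ℕ, 1 ≤ r →
      ((Finset.univ.filter (fun k : V => G.dist i k = r)).card : ℝ) ≤ cD * (r : ℝ) ^ (D - 1))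
    (Ξ Ξ' : Finset V) (hΞ : Ξ.Nonempty) (hΞ' : Ξ'.Nonempty) (hdisj : Disjoint Ξ Ξ')
    (f : ℕ → ℝ) (hf : ∀ d : ℕ, 0 ≤ f d) :
    (∑ i ∈ Ξ, ∑ j ∈ Ξ', f (G.dist i j)) ≤
      cD * (min (graphBoundary G Ξ).card (graphBoundary G Ξ').card : ℝ) *
        ∑ d ∈ Finset.Icc
            ((Ξ ×ˢ Ξ').inf' (hΞ.product hΞ') fun p => G.dist p.1 p.2)
            ((Ξ ×ˢ Ξ').sup' (hΞ.product hΞ') fun p => G.dist p.1 p.2),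
          f d * (d : ℝ) ^ (D - 1) *
            (1 + cD *
              ((d - (Ξ ×ˢ Ξ').inf' (hΞ.product hΞ') fun p => G.dist p.1 p.2 : ℕ) : ℝ) ^ D) := by
  rcases le_total (graphBoundary G Ξ').card (graphBoundary G Ξ).card with h | h
  · have h' : ((graphBoundary G Ξ').card : ℝ) ≤ ((graphBoundary G Ξ).card : ℝ) := by
      exact_mod_cast h
    rw [min_eq_right h']
    exact aux_bound G hconn D hD cD hcD hdim Ξ Ξ' hΞ hΞ' hdisj f hf
  · have h' : ((graphBoundary G Ξ).card : ℝ) ≤ ((graphBoundary G Ξ').card : ℝ) := by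
      exact_mod_cast h
    rw [min_eq_left h']
    have key := aux_bound G hconn D hD cD hcD hdim Ξ' Ξ hΞ' hΞ hdisj.symm f hf
    have hinf : ((Ξ' ×ˢ Ξ).inf' (hΞ'.product hΞ) fun p => G.dist p.1 p.2) =
        ((Ξ ×ˢ Ξ').inf' (hΞ.product hΞ') fun p => G.dist p.1 p.2) := by
      apply le_antisymm
      · apply Finset.le_inf'
        intro p hp
        rw [Finset.mem_product] at hp
        have := Finset.inf'_le (fun p : V × V => G.dist p.1 p.2)
          (Finset.mem_product.mpr ⟨hp.2, hp.1⟩ : (p.2, p.1) ∈ Ξ' ×ˢ Ξ)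
        exact le_of_le_of_eq this SimpleGraph.dist_comm
      · apply Finset.le_inf'
        intro p hp
        rw [Finset.mem_product] at hp
        have := Finset.inf'_le (fun p : V × V => G.dist p.1 p.2)
          (Finset.mem_product.mpr ⟨hp.2, hp.1⟩ : (p.2, p.1) ∈ Ξ ×ˢ Ξ')
        exact le_of_le_of_eq this SimpleGraph.dist_comm
    have hsup : ((Ξ' ×ˢ Ξ).sup' (hΞ'.product hΞ) fun p => G.dist p.1 p.2) =
        ((Ξ ×ˢ Ξ').sup' (hΞ.product hΞ') fun p => G.dist p.1 p.2) := by
      apply le_antisymm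
      · apply Finset.sup'_le
        intro p hp
        rw [Finset.mem_product] at hp
        have := Finset.le_sup' (fun p : V × V => G.dist p.1 p.2)
          (Finset.mem_product.mpr ⟨hp.2, hp.1⟩ : (p.2, p.1) ∈ Ξ ×ˢ Ξ')
        exact le_of_eq_of_le SimpleGraph.dist_comm this
      · apply Finset.sup'_le
        intro p hp
        rw [Finset.mem_product] at hp
        have := Finset.le_sup' (fun p : V × V => G.dist p.1 p.2)
          (Finset.mem_product.mpr ⟨hp.2, hp.1⟩ : (p.2, p.1) ∈ Ξ' ×ˢ Ξ)
        exact le_of_eq_of_le SimpleGraph.dist_comm this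
    have hsum : (∑ i ∈ Ξ', ∑ j ∈ Ξ, f (G.dist i j)) =
        (∑ i ∈ Ξ, ∑ j ∈ Ξ', f (G.dist i j)) := by
      rw [Finset.sum_comm]
      exact Finset.sum_congr rfl fun i _ => Finset.sum_congr rfl fun j _ => by
        rw [SimpleGraph.dist_comm]
    rw [hinf, hsup, hsum] at key
    exact key
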